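/- arXiv:1108.1776 — 2 statements merged into one kernel-verified Lean document; each statement's English description precedes it below -/
import Mathlib

section
/- Let (W,S) be a finite Coxeter system with Demazure product δ, and let Q be a word in S with δ(Q) = π. Let r be a reduced word for π⁻¹w₀ and let Q' be the concatenation of Q and r. Then δ(Q') = w₀ and the subword complexes Δ(Q,π) and Δ(Q', w₀) are isomorphic (via the natural inclusion of positions of Q into Q'). -/
open List

namespace SubwordComplex

set_option linter.unusedSectionVars false
set_option maxHeartbeats 1000000



variable {B : Type*} [DecidableEq B] [Inhabited B] {W : Type*} [Group W]
variable {M : CoxeterMatrix B} (cs : CoxeterSystem M W)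

/-- The word formed by the letters of `Q` at positions not in `F`. -/
def complement (Q : List B) (F : Finset ℕ) : List B :=
  ((Q.zipIdx.map Prod.swap).filter (fun p => p.1 ∉ F)).map Prod.snd

/-- `L` contains a reduced expression for `π` as a subword. -/
def ContainsReduced (L : List B) (π : W) : Prop :=
  ∃ L' : List B, L'.Sublist L ∧ cs.IsReduced L' ∧ cs.wordProd L' = π

/-- `F` is a face of the subword complex `Δ(Q, π)`. -/
def IsFace (Q : List B) (π : W) (F : Finset ℕ) : Prop :=
  F ⊆ Finset.range Q.length ∧ ContainsReduced cs (complement Q F) π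

/-- `F` is a facet (maximal face) of the subword complex `Δ(Q, π)`. -/
def IsFacet (Q : List B) (π : W) (F : Finset ℕ) : Prop :=
  IsFace cs Q π F ∧ ∀ F' : Finset ℕ, IsFace cs Q π F' → F ⊆ F' → F' = F

/-- `w₀` is the longest element. -/
def IsLongest (w₀ : W) : Prop := ∀ w : W, cs.length w ≤ cs.length w₀

/-- The Demazure product of a word. -/
noncomputable def demazure (Q : List B) : W :=
  Q.foldl (fun w i => if cs.length w < cs.length (w * cs.simple i) then w * cs.simple i
    else w) 1

/-- A reduced word for a Coxeter element: each generator appears exactly once. -/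
def IsCoxeterWord (c : List B) : Prop := c.Nodup ∧ ∀ b : B, b ∈ c

/-- The letter of the infinite word `c^∞` at position `i`. -/
def cInfLetter (c : List B) (i : ℕ) : B := c.getD (i % c.length) default

/-- `P` is the lexicographically first increasing list of positions in `c^∞` whose
associated word is a reduced word for `w`. -/
def IsSortingIndices (c : List B) (w : W) (P : List ℕ) : Prop :=
  P.Chain' (· < ·) ∧ cs.IsReduced (P.map (cInfLetter c)) ∧
    cs.wordProd (P.map (cInfLetter c)) = w ∧
    ∀ P' : List ℕ, P'.Chain' (· < ·) → cs.IsReduced (P'.map (cInfLetter c)) →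
      cs.wordProd (P'.map (cInfLetter c)) = w → P = P' ∨ List.Lex (· < ·) P P'

/-- `sw` is the `c`-sorting word of `w`. -/
def IsSortingWord (c : List B) (w : W) (sw : List B) : Prop :=
  ∃ P : List ℕ, IsSortingIndices cs c w P ∧ sw = P.map (cInfLetter c)

/-- One step of interchanging two adjacent commuting letters. -/
def CommStep (L L' : List B) : Prop :=
  ∃ (u v : List B) (a b : B),
    cs.simple a * cs.simple b = cs.simple b * cs.simple a ∧
    L = u ++ a :: b :: v ∧ L' = u ++ b :: a :: v

/-- Two words coincide up to commutations. -/
def CommEquiv (L L' : List B) : Prop := Relation.EqvGen (CommStep cs) L L'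

/-- The (combinatorial model of the) root `w(α_s)`: a pair consisting of the
reflection `w s w⁻¹` and a sign which is `true` if the root is positive. -/
noncomputable def rootPair (w : W) (s : B) : W × Bool :=
  (w * cs.simple s * w⁻¹, decide (cs.length w < cs.length (w * cs.simple s)))

/-- The negative of a root in the combinatorial model. -/
def negRoot (r : W × Bool) : W × Bool := (r.1, !r.2)

/-- The product of the letters of `Q \ F` occurring strictly before position `q`. -/
def prefixProd (Q : List B) (F : Finset ℕ) (q : ℕ) : W :=
  cs.wordProd (((Q.zipIdx.map Prod.swap).filter (fun p => p.1 ∉ F ∧ p.1 < q)).map Prod.snd)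

/-- The root function `r_F` of a facet `F`, in the combinatorial model. -/
noncomputable def rootF (Q : List B) (F : Finset ℕ) (q : ℕ) : W × Bool :=
  rootPair cs (prefixProd cs Q F q) (Q.getD q default)


attribute [local instance] Classical.propDecidable

local prefix:100 "ℓ" => cs.length
local prefix:100 "πw" => cs.wordProd
local prefix:100 "σ" => cs.simple
local prefix:100 "ris" => cs.rightInvSeq

private lemma simple_conj_eq_iff (i : B) (x : W) :
    (σ i * x * σ i = σ i) ↔ (x = σ i) := by
  constructor
  · intro h
    have := congrArg (fun y => σ i * y * σ i) h
    simpa [mul_assoc, cs.simple_mul_simple_cancel_left,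
      cs.simple_mul_simple_cancel_right] using this
  · rintro h; rw [h, cs.simple_mul_simple_cancel_right]

private lemma sign_aux (c : ℕ) (e : ℤˣ) :
    -(if Odd c then -e else e) = if Odd (c + 1) then -e else e := by
  rcases Nat.even_or_odd c with h | h
  · rw [if_neg (Nat.not_odd_iff_even.mpr h), if_pos (by simpa [Nat.odd_add_one, Nat.not_odd_iff_even] using h)]
  · rw [if_pos h, if_neg (by simpa [Nat.odd_add_one] using h), neg_neg]

/-- The involution of `W × ℤˣ` associated to a generator. -/
noncomputable def eta (i : B) : Equiv.Perm (W × ℤˣ) where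
  toFun p := (σ i * p.1 * σ i, if p.1 = σ i then -p.2 else p.2)
  invFun p := (σ i * p.1 * σ i, if p.1 = σ i then -p.2 else p.2)
  left_inv p := by
    refine Prod.ext ?_ ?_
    · simp [mul_assoc, cs.simple_mul_simple_cancel_left, cs.simple_mul_simple_cancel_right]
    · simp only [simple_conj_eq_iff]
      rcases Decidable.em (p.1 = σ i) with h | h <;> simp [h]
  right_inv p := by
    refine Prod.ext ?_ ?_
    · simp [mul_assoc, cs.simple_mul_simple_cancel_left, cs.simple_mul_simple_cancel_right]
    · simp only [simple_conj_eq_iff]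
      rcases Decidable.em (p.1 = σ i) with h | h <;> simp [h]

@[simp] lemma eta_apply (i : B) (p : W × ℤˣ) :
    eta cs i p = (σ i * p.1 * σ i, if p.1 = σ i then -p.2 else p.2) := rfl

/-- The product of the `eta`s along a word. -/
noncomputable def Peta (ω : List B) : Equiv.Perm (W × ℤˣ) := (ω.map (eta cs)).prod

@[simp] lemma Peta_nil : Peta cs [] = 1 := rfl

lemma Peta_cons (i : B) (ω : List B) : Peta cs (i :: ω) = eta cs i * Peta cs ω := by
  simp [Peta]

lemma Peta_apply (ω : List B) (p : W × ℤˣ) :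
    Peta cs ω p = (πw ω * p.1 * (πw ω)⁻¹,
      if Odd ((ris ω).count p.1) then -p.2 else p.2) := by
  induction ω generalizing p with
  | nil => simp
  | cons i ω ih =>
    rw [Peta_cons]
    simp only [Equiv.Perm.mul_apply, ih, eta_apply]
    have hris : ris (i :: ω) = (πw ω)⁻¹ * σ i * πw ω :: ris ω := rfl
    refine Prod.ext ?_ ?_
    · simp [cs.wordProd_cons, mul_assoc]
    · simp only [hris, List.count_cons, beq_iff_eq]
      have hiff : (πw ω * p.1 * (πw ω)⁻¹ = σ i) ↔ (((πw ω)⁻¹ * σ i * πw ω) = p.1) := by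
        constructor
        · intro h; rw [← h]; group
        · intro h; rw [← h]; group
      rcases Decidable.em (((πw ω)⁻¹ * σ i * πw ω) = p.1) with hc | hc
      · rw [if_pos (hiff.mpr hc), if_pos hc]
        exact sign_aux _ _
      · rw [if_neg (fun hh => hc (hiff.mp hh)), if_neg hc, add_zero]

/-! ### The alternating word computation and liftability -/

/-- The entries of the right inversion sequence of an alternating word. -/
noncomputable def fL (i j : B) (L : ℕ) : W :=
  (πw (CoxeterSystem.alternatingWord i j L))⁻¹ * πw (CoxeterSystem.alternatingWord i j (L + 1))

lemma simple_mul_pow_comm (i j : B) (c : ℕ) :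
    σ j * (σ i * σ j) ^ c = ((σ i * σ j) ^ c)⁻¹ * σ j := by
  induction c with
  | zero => simp
  | succ c ih =>
    have hbase : σ j * (σ i * σ j) = (σ i * σ j)⁻¹ * σ j := by
      rw [mul_inv_rev, cs.inv_simple, cs.inv_simple, mul_assoc]
    calc σ j * (σ i * σ j) ^ (c + 1)
        = (σ j * (σ i * σ j) ^ c) * (σ i * σ j) := by rw [pow_succ, mul_assoc]
      _ = ((σ i * σ j) ^ c)⁻¹ * (σ j * (σ i * σ j)) := by rw [ih, mul_assoc]
      _ = ((σ i * σ j) ^ c)⁻¹ * ((σ i * σ j)⁻¹ * σ j) := by rw [hbase]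
      _ = ((σ i * σ j)⁻¹) ^ c * ((σ i * σ j)⁻¹ * σ j) := by rw [inv_pow]
      _ = ((σ i * σ j)⁻¹) ^ (c + 1) * σ j := by rw [← mul_assoc, ← pow_succ]
      _ = ((σ i * σ j) ^ (c + 1))⁻¹ * σ j := by rw [inv_pow]

lemma fL_closed (i j : B) (L : ℕ) :
    fL cs i j L = ((σ i * σ j) ^ L)⁻¹ * σ j := by
  have hb : ∀ m : ℕ, πw (CoxeterSystem.alternatingWord i j m)
      = (if Even m then 1 else σ j) * (σ i * σ j) ^ (m / 2) :=
    fun m => cs.prod_alternatingWord_eq_mul_pow i j m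
  rcases Nat.even_or_odd L with ⟨c, hc⟩ | ⟨c, hc⟩
  · subst hc
    rw [fL, hb, hb]
    rw [if_pos ⟨c, rfl⟩, if_neg (by simp [parity_simps]), one_mul]
    have d1 : (c + c) / 2 = c := by omega
    have d2 : (c + c + 1) / 2 = c := by omega
    rw [d1, d2, simple_mul_pow_comm, ← mul_assoc, ← mul_inv_rev, ← pow_add]
  · subst hc
    rw [fL, hb, hb]
    rw [if_neg (by simp [parity_simps]), if_pos ⟨c + 1, by ring⟩]
    have d1 : (2 * c + 1) / 2 = c := by omega
    have d2 : (2 * c + 1 + 1) / 2 = c + 1 := by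
      rw [show 2 * c + 1 + 1 = 2 * (c + 1) by ring]
      exact Nat.mul_div_cancel_left _ (by norm_num)
    rw [d1, d2, one_mul, mul_inv_rev, cs.inv_simple, mul_assoc,
      simple_mul_pow_comm, ← mul_assoc, ← mul_inv_rev, ← pow_add]
    have : c + 1 + c = 2 * c + 1 := by ring
    rw [this]

lemma fL_conj (i j : B) (L : ℕ) :
    MulAut.conj (σ j) (fL cs j i L) = fL cs i j (L + 1) := by
  have hq : σ j * σ i = (σ i * σ j)⁻¹ := by rw [mul_inv_rev, cs.inv_simple, cs.inv_simple]
  rw [fL_closed, fL_closed, MulAut.conj_apply, cs.inv_simple, hq, inv_pow, inv_inv]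
  calc σ j * ((σ i * σ j) ^ L * σ i) * σ j
      = (σ j * (σ i * σ j) ^ L) * (σ i * σ j) := by rw [mul_assoc, mul_assoc, mul_assoc]
    _ = ((σ i * σ j) ^ L)⁻¹ * (σ j * (σ i * σ j)) := by
        rw [simple_mul_pow_comm, mul_assoc]
    _ = ((σ i * σ j) ^ L)⁻¹ * ((σ i * σ j)⁻¹ * σ j) := by
        rw [show σ j * (σ i * σ j) = (σ i * σ j)⁻¹ * σ j by rw [mul_inv_rev,
          cs.inv_simple, cs.inv_simple, mul_assoc]]
    _ = ((σ i * σ j)⁻¹) ^ L * ((σ i * σ j)⁻¹ * σ j) := by rw [inv_pow]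
    _ = ((σ i * σ j)⁻¹) ^ (L + 1) * σ j := by rw [← mul_assoc, ← pow_succ]
    _ = ((σ i * σ j) ^ (L + 1))⁻¹ * σ j := by rw [inv_pow]

lemma fL_zero (i j : B) : fL cs i j 0 = σ j := by
  rw [fL_closed]; simp

lemma ris_alternatingWord (n : ℕ) : ∀ i j : B,
    ris (CoxeterSystem.alternatingWord i j n) = ((List.range n).reverse).map (fL cs i j) := by
  induction n with
  | zero => intro i j; simp [CoxeterSystem.alternatingWord]
  | succ n ih =>
    intro i j
    rw [CoxeterSystem.alternatingWord_succ, cs.rightInvSeq_concat, ih j i,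
      List.range_succ_eq_map, List.reverse_cons, List.map_append, List.concat_eq_append,
      List.map_map]
    congr 1
    · rw [← List.map_reverse, List.map_map]
      refine List.map_congr_left fun L _ => ?_
      simpa [Function.comp] using fL_conj cs i j L
    · simp [fL_zero]

lemma fL_shift (i j : B) (L : ℕ) : fL cs i j (M i j + L) = fL cs i j L := by
  rw [fL_closed, fL_closed, pow_add, cs.simple_mul_simple_pow, one_mul]

lemma count_ris_braid_even (i j : B) (w : W) :
    ¬ Odd ((ris (CoxeterSystem.alternatingWord i j (2 * M i j))).count w) := by
  have h1 : ((List.range (2 * M i j)).reverse).map (fL cs i j)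
      = ((List.range (2 * M i j)).map (fL cs i j)).reverse := by rw [List.map_reverse]
  rw [ris_alternatingWord, h1, List.count_reverse, two_mul, List.range_add,
    List.map_append, List.count_append, List.map_map]
  have h2 : List.map (fL cs i j ∘ fun x => M i j + x) (List.range (M i j))
      = List.map (fL cs i j) (List.range (M i j)) :=
    List.map_congr_left fun L _ => fL_shift cs i j L
  rw [h2, Nat.not_odd_iff_even]
  exact ⟨_, rfl⟩

lemma eta_liftable : CoxeterMatrix.IsLiftable M (fun i => eta cs i) := by
  intro i j
  show (eta cs i * eta cs j) ^ M i j = 1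
  have hpow : ∀ k : ℕ, (eta cs i * eta cs j) ^ k
      = Peta cs (CoxeterSystem.alternatingWord i j (2 * k)) := by
    intro k
    induction k with
    | zero => simp [CoxeterSystem.alternatingWord]
    | succ k ih =>
      have e1 : 2 * (k + 1) = (2 * k + 1) + 1 := by ring
      rw [e1, CoxeterSystem.alternatingWord_succ', CoxeterSystem.alternatingWord_succ',
        if_neg (by simp [parity_simps]), if_pos ⟨k, two_mul k⟩,
        Peta_cons, Peta_cons, ← ih, pow_succ', mul_assoc]
  rw [hpow]
  refine Equiv.ext fun p => ?_
  rw [Peta_apply]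
  have hprod : πw (CoxeterSystem.alternatingWord i j (2 * M i j)) = 1 := by
    rw [cs.prod_alternatingWord_eq_mul_pow, if_pos ⟨M i j, two_mul _⟩, one_mul,
      Nat.mul_div_cancel_left _ (by norm_num), cs.simple_mul_simple_pow]
  rw [hprod, if_neg (count_ris_braid_even cs i j p.1)]
  simp

/-- The sign representation on `W × ℤˣ`. -/
noncomputable def Phi : W →* Equiv.Perm (W × ℤˣ) :=
  cs.lift ⟨fun i => eta cs i, eta_liftable cs⟩

lemma Phi_wordProd (ω : List B) : Phi cs (πw ω) = Peta cs ω := by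
  induction ω with
  | nil => simp [Peta]
  | cons i ω ih =>
    rw [cs.wordProd_cons, map_mul, ih, Peta_cons]
    congr 1
    exact cs.lift_apply_simple (eta_liftable cs) i

lemma count_parity_invariant {ω₁ ω₂ : List B} (h : πw ω₁ = πw ω₂) (t : W) :
    (Odd ((ris ω₁).count t) ↔ Odd ((ris ω₂).count t)) := by
  have he : Peta cs ω₁ = Peta cs ω₂ := by rw [← Phi_wordProd, ← Phi_wordProd, h]
  have h2 := congrArg Prod.snd (congrArg (fun (f : Equiv.Perm (W × ℤˣ)) => f (t, 1)) he)
  simp only [Peta_apply] at h2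
  constructor <;> intro hc
  · by_contra hc2
    rw [if_pos hc, if_neg hc2] at h2
    exact absurd h2 (by decide)
  · by_contra hc2
    rw [if_neg hc2, if_pos hc] at h2
    exact absurd h2 (by decide)

/-! ### Inversion sequence computations and the strong exchange property -/

lemma ris_append (ω₁ ω₂ : List B) :
    ris (ω₁ ++ ω₂) = (ris ω₁).map (fun t => (πw ω₂)⁻¹ * t * πw ω₂) ++ ris ω₂ := by
  induction ω₁ with
  | nil => simp
  | cons i ω₁ ih =>
    have h1 : ris (i :: (ω₁ ++ ω₂))
        = (πw (ω₁ ++ ω₂))⁻¹ * σ i * πw (ω₁ ++ ω₂) :: ris (ω₁ ++ ω₂) := rfl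
    have h2 : ris (i :: ω₁) = (πw ω₁)⁻¹ * σ i * πw ω₁ :: ris ω₁ := rfl
    rw [List.cons_append, h1, ih, h2, List.map_cons, List.cons_append]
    congr 1
    rw [cs.wordProd_append, mul_inv_rev]
    group

lemma lis_eq_map_ris (ω : List B) :
    cs.leftInvSeq ω = (ris ω).map (fun t => πw ω * t * (πw ω)⁻¹) := by
  induction ω with
  | nil => simp
  | cons i ω ih =>
    have h1 : cs.leftInvSeq (i :: ω)
        = σ i :: (cs.leftInvSeq ω).map (MulAut.conj (σ i)) := rfl
    have h2 : ris (i :: ω) = (πw ω)⁻¹ * σ i * πw ω :: ris ω := rfl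
    rw [h1, ih, h2, List.map_cons, List.map_map]
    congr 1
    · rw [cs.wordProd_cons, mul_inv_rev, cs.inv_simple]
      group
      simp [cs.simple_sq, zpow_two, mul_assoc]
    · refine List.map_congr_left fun r _ => ?_
      simp only [Function.comp_apply, MulAut.conj_apply, cs.wordProd_cons, mul_inv_rev,
        cs.inv_simple]
      group



lemma count_map_conj_eq_countP (l : List W) (a t : W) :
    (l.map (fun r => a⁻¹ * r * a)).count t = l.countP (fun r => a * t * a⁻¹ == r) := by
  rw [List.count_eq_countP, List.countP_map]
  refine List.countP_congr fun r _ => ?_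
  simp only [Function.comp_apply, beq_iff_eq]
  constructor
  · intro h; rw [← h]; group
  · intro h; rw [← h]; group

lemma count_refl_self_odd {t : W} (ht : cs.IsReflection t) {ω : List B} (hω : πw ω = t) :
    Odd ((ris ω).count t) := by
  obtain ⟨x, k, hxk⟩ := ht
  obtain ⟨A, hA⟩ : ∃ A, πw A = x := cs.wordProd_surjective x
  have hcan : πw ω = πw (A ++ ([k] ++ A.reverse)) := by
    rw [hω, cs.wordProd_append, cs.wordProd_append, cs.wordProd_reverse, hA]
    simp [hxk, mul_assoc]
  rw [count_parity_invariant cs hcan t]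
  rw [ris_append, ris_append, List.count_append, List.count_append]
  have hArev : πw (A.reverse) = x⁻¹ := by rw [cs.wordProd_reverse, hA]
  have hsingle : ris [k] = [σ k] := by simp
  have hmid : ((ris [k]).map (fun r => (πw A.reverse)⁻¹ * r * πw A.reverse)).count t = 1 := by
    rw [hsingle, hArev, hxk]
    simp
  rw [hmid]
  have hk1 : πw ([k] ++ A.reverse) = σ k * x⁻¹ := by
    rw [cs.wordProd_append, cs.wordProd_reverse, hA]
    simp
  have hcount1 : ((ris A).map
      (fun r => (πw ([k] ++ A.reverse))⁻¹ * r * πw ([k] ++ A.reverse))).count t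
      = (ris A).countP (fun r => σ k == r) := by
    rw [hk1, count_map_conj_eq_countP]
    have hel : σ k * x⁻¹ * t * (σ k * x⁻¹)⁻¹ = σ k := by rw [hxk]; group
    rw [hel]
  have hcount2 : (ris A.reverse).count t = (ris A).countP (fun r => σ k == r) := by
    rw [cs.rightInvSeq_reverse, List.count_reverse, lis_eq_map_ris, hA]
    have : (ris A).map (fun r => x * r * x⁻¹) = (ris A).map (fun r => (x⁻¹)⁻¹ * r * x⁻¹) := by
      simp
    rw [this, count_map_conj_eq_countP]
    have hel : x⁻¹ * t * (x⁻¹)⁻¹ = σ k := by rw [hxk]; group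
    rw [hel]
  rw [hcount1, hcount2, Nat.odd_iff]
  omega

lemma odd_count_iff_inversion {t : W} (ht : cs.IsReflection t) (ω : List B) :
    Odd ((ris ω).count t) ↔ ℓ (πw ω * t) < ℓ (πw ω) := by
  constructor
  · intro hodd
    obtain ⟨R, hR, hRw⟩ := cs.exists_reduced_word' (πw ω)
    rw [count_parity_invariant cs hRw t] at hodd
    have hmem : t ∈ ris R := by
      rw [← List.count_pos_iff]
      rcases Nat.eq_zero_or_pos ((ris R).count t) with h | h
      · rw [h] at hodd; simpa using hodd
      · exact h
    have hinv := cs.isRightInversion_of_mem_rightInvSeq hR hmem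
    rw [hRw]
    exact hinv.2
  · intro hlt
    obtain ⟨U, hU, hUu⟩ := cs.exists_reduced_word' (πw ω * t)
    obtain ⟨T, hTt⟩ : ∃ T, πw T = t := cs.wordProd_surjective t
    have hprod : πw ω = πw (U ++ T) := by
      rw [cs.wordProd_append, ← hUu, hTt, mul_assoc, ht.mul_self, mul_one]
    rw [count_parity_invariant cs hprod t, ris_append, List.count_append]
    have h1 : ((ris U).map (fun r => (πw T)⁻¹ * r * πw T)).count t = 0 := by
      rw [hTt, count_map_conj_eq_countP]
      have hel : t * t * t⁻¹ = t := by group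
      rw [hel]
      rw [List.countP_eq_zero]
      intro r hr
      simp only [beq_iff_eq]
      intro hrt
      subst hrt
      have hinv := cs.isRightInversion_of_mem_rightInvSeq hU hr
      rw [← hUu] at hinv
      have h2 := hinv.2
      rw [mul_assoc, ht.mul_self, mul_one] at h2
      omega
    rw [h1, zero_add]
    exact count_refl_self_odd cs ht hTt

/-- Strong exchange property. -/
lemma strongExchange {t : W} (ht : cs.IsReflection t) {ω : List B}
    (hlt : ℓ (πw ω * t) < ℓ (πw ω)) : t ∈ ris ω := by
  have hodd := (odd_count_iff_inversion cs ht ω).mpr hlt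
  rw [← List.count_pos_iff]
  rcases Nat.eq_zero_or_pos ((ris ω).count t) with h | h
  · rw [h] at hodd; simpa using hodd
  · exact h

lemma exchange_eraseIdx {t : W} (ht : cs.IsReflection t) {ω : List B}
    (hlt : ℓ (πw ω * t) < ℓ (πw ω)) :
    ∃ j < ω.length, πw (ω.eraseIdx j) = πw ω * t := by
  obtain ⟨j, hj, hget⟩ := List.mem_iff_getElem.mp (strongExchange cs ht hlt)
  rw [cs.length_rightInvSeq] at hj
  refine ⟨j, hj, ?_⟩
  rw [← cs.wordProd_mul_getD_rightInvSeq]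
  congr 1
  rw [List.getD_eq_getElem _ _ (by rwa [cs.length_rightInvSeq])]
  exact hget

/-! ### Deletion property and Bruhat order -/

lemma exists_reduced_sublist (ω : List B) :
    ∃ V, V.Sublist ω ∧ cs.IsReduced V ∧ πw V = πw ω := by
  induction ω using List.reverseRecOn with
  | nil => exact ⟨[], by simp, by simp [CoxeterSystem.IsReduced], rfl⟩
  | append_singleton ω i ih =>
    obtain ⟨V, hVsub, hVred, hVprod⟩ := ih
    have hVlen : ℓ (πw ω) = V.length := by rw [← hVprod]; exact hVred
    rcases cs.length_mul_simple (πw ω) i with h | h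
    · refine ⟨V ++ [i], hVsub.append (List.Sublist.refl [i]), ?_, ?_⟩
      · show ℓ (πw (V ++ [i])) = (V ++ [i]).length
        rw [cs.wordProd_append, hVprod, cs.wordProd_singleton, h, List.length_append]
        simp [← hVlen]
      · rw [cs.wordProd_append, cs.wordProd_append, hVprod]
    · have hlt : ℓ (πw V * σ i) < ℓ (πw V) := by rw [hVprod]; omega
      obtain ⟨j, hj, hje⟩ := exchange_eraseIdx cs (cs.isReflection_simple i) hlt
      refine ⟨V.eraseIdx j, ?_, ?_, ?_⟩
      · exact ((List.eraseIdx_sublist V j).trans hVsub).trans (List.sublist_append_left ω [i])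
      · show ℓ (πw (V.eraseIdx j)) = (V.eraseIdx j).length
        rw [hje, hVprod, List.length_eraseIdx, if_pos hj]
        omega
      · rw [hje, hVprod, cs.wordProd_append, cs.wordProd_singleton]

/-- One step in the Bruhat order. -/
def bstep (u w : W) : Prop := ∃ t, cs.IsReflection t ∧ w = u * t ∧ ℓ u < ℓ w

/-- The Bruhat order (as a reflexive-transitive closure of `bstep`). -/
def ble (u w : W) : Prop := Relation.ReflTransGen (bstep cs) u w

lemma ble.refl (u : W) : ble cs u u := Relation.ReflTransGen.refl

lemma ble_mul_simple_of_lt {u : W} {i : B} (h : ℓ u < ℓ (u * σ i)) :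
    ble cs u (u * σ i) :=
  Relation.ReflTransGen.single ⟨σ i, cs.isReflection_simple i, rfl, h⟩

lemma ble_of_mul_simple_lt {u : W} {i : B} (h : ℓ (u * σ i) < ℓ u) :
    ble cs (u * σ i) u :=
  Relation.ReflTransGen.single ⟨σ i, cs.isReflection_simple i,
    by rw [mul_assoc, cs.simple_mul_simple_self, mul_one], h⟩

lemma ble.length_le {u w : W} (h : ble cs u w) : ℓ u ≤ ℓ w := by
  induction h with
  | refl => exact le_rfl
  | tail _ hstep ih => obtain ⟨t, _, _, hlen⟩ := hstep; omega

lemma ble_contains {u w : W} (h : ble cs u w) :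
    ∀ R : List B, cs.IsReduced R → πw R = w → ContainsReduced cs R u := by
  induction h with
  | refl => exact fun R hR hRw => ⟨R, List.Sublist.refl R, hR, hRw⟩
  | @tail b c _ hstep ih =>
    obtain ⟨t, ht, hcb, _⟩ := hstep
    intro R hR hRw
    have hbt : πw R * t = b := by rw [hRw, hcb, mul_assoc, ht.mul_self, mul_one]
    have hlt : ℓ (πw R * t) < ℓ (πw R) := by
      rw [hbt, hRw, hcb]
      obtain ⟨_, _, _, hlen⟩ : bstep cs b c := ⟨t, ht, hcb, by rw [hcb] at *; omega⟩
      · rw [← hcb]; omega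
    obtain ⟨j, _, hje⟩ := exchange_eraseIdx cs ht hlt
    obtain ⟨V, hVsub, hVred, hVprod⟩ := exists_reduced_sublist cs (R.eraseIdx j)
    obtain ⟨U, hUsub, hUred, hUprod⟩ := ih V hVred (by rw [hVprod, hje, hbt])
    exact ⟨U, hUsub.trans (hVsub.trans (List.eraseIdx_sublist R j)), hUred, hUprod⟩



/-! ### Subword property and lifting (joint strong induction) -/

lemma bruhat_triple : ∀ n : ℕ,
    (∀ u w : W, ∀ i : B, ble cs u w → ℓ w < ℓ (w * σ i) → ℓ (w * σ i) ≤ n →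
      ble cs (u * σ i) (w * σ i)) ∧
    (∀ u w : W, ∀ i : B, ble cs u w → ℓ u < ℓ (u * σ i) → ℓ (w * σ i) < ℓ w → ℓ w ≤ n →
      ble cs (u * σ i) w) ∧
    (∀ R U : List B, cs.IsReduced R → U.Sublist R → R.length ≤ n →
      ble cs (πw U) (πw R)) := by
  intro n
  induction n using Nat.strong_induction_on with
  | _ n ih =>
  have hA : ∀ u w : W, ∀ i : B, ble cs u w → ℓ w < ℓ (w * σ i) → ℓ (w * σ i) ≤ n →
      ble cs (u * σ i) (w * σ i) := by
    intro u w i hble hasc hbound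
    rcases le_or_gt (ℓ (u * σ i)) (ℓ u) with hdesc | husc
    · have hne := cs.length_mul_simple_ne u i
      have h1 : ble cs (u * σ i) u := ble_of_mul_simple_lt cs (by omega)
      exact (h1.trans hble).trans (ble_mul_simple_of_lt cs hasc)
    · rcases Relation.ReflTransGen.cases_tail hble with heq | ⟨c, huc, hstep⟩
      · subst heq
        exact ble.refl cs _
      · obtain ⟨t, ht, hw, hcw⟩ := hstep
        rcases lt_or_ge (ℓ c) (ℓ (c * σ i)) with hca | hcd
        · have hcsi : ℓ (c * σ i) ≤ ℓ c + 1 := by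
            have := cs.length_mul_simple c i
            omega
          have hrec : ble cs (u * σ i) (c * σ i) :=
            (ih (ℓ (c * σ i)) (by omega)).1 u c i huc hca le_rfl
          refine hrec.tail ⟨σ i * t * σ i, ?_, ?_, ?_⟩
          · have := ht.conj (σ i)
            rwa [cs.inv_simple] at this
          · rw [hw]
            simp [mul_assoc, cs.simple_mul_simple_cancel_left]
          · omega
        · have hcd' : ℓ (c * σ i) < ℓ c := by
            have := cs.length_mul_simple_ne c i
            omega
          have hrec : ble cs (u * σ i) c :=
            (ih (ℓ c) (by omega)).2.1 u c i huc husc hcd' le_rfl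
          exact (hrec.tail ⟨t, ht, hw, hcw⟩).tail
            ⟨σ i, cs.isReflection_simple i, rfl, hasc⟩
  have hB : ∀ u w : W, ∀ i : B, ble cs u w → ℓ u < ℓ (u * σ i) → ℓ (w * σ i) < ℓ w →
      ℓ w ≤ n → ble cs (u * σ i) w := by
    intro u w i hble husc hdesc hbound
    obtain ⟨R₁, hR₁, hR₁w⟩ := cs.exists_reduced_word' (w * σ i)
    have hR₁len : R₁.length = ℓ (w * σ i) := by
      have : ℓ (πw R₁) = R₁.length := hR₁
      rw [← hR₁w] at this
      omega
    have hRw : πw (R₁ ++ [i]) = w := by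
      rw [cs.wordProd_append, ← hR₁w, cs.wordProd_singleton, mul_assoc,
        cs.simple_mul_simple_self, mul_one]
    have hR : cs.IsReduced (R₁ ++ [i]) := by
      show ℓ (πw (R₁ ++ [i])) = (R₁ ++ [i]).length
      rw [hRw, List.length_append, List.length_singleton, hR₁len]
      have := cs.length_mul_simple w i
      omega
    obtain ⟨U, hUsub, hUred, hUprod⟩ := ble_contains cs hble _ hR hRw
    rcases List.sublist_append_iff.mp hUsub with ⟨U₁, U₂, hUeq, hU₁, hU₂⟩
    have hC' := (ih R₁.length (by omega)).2.2
    rcases List.sublist_singleton.mp hU₂ with h2 | h2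
    · -- U = U₁ entirely inside R₁, so u ≤ w * σ i
      have hU₁u : πw U₁ = u := by
        rw [← hUprod, hUeq, h2, List.append_nil]
      have hble2 : ble cs u (w * σ i) := by
        rw [← hU₁u, hR₁w]
        exact hC' R₁ U₁ hR₁ hU₁ le_rfl
      have := hA u (w * σ i) i hble2 (by
        rw [mul_assoc, cs.simple_mul_simple_self, mul_one]; omega) (by
        rw [mul_assoc, cs.simple_mul_simple_self, mul_one]; omega)
      rwa [mul_assoc, cs.simple_mul_simple_self, mul_one] at this
    · -- U = U₁ ++ [i]
      have hπU : πw U = πw U₁ * σ i := by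
        rw [hUeq, h2, cs.wordProd_append, cs.wordProd_singleton]
      have hU₁u : πw U₁ = u * σ i := by
        have : πw U₁ = πw U * σ i := by
          rw [hπU, mul_assoc, cs.simple_mul_simple_self, mul_one]
        rw [this, hUprod]
      have hble2 : ble cs (u * σ i) (w * σ i) := by
        rw [← hU₁u, hR₁w]
        exact hC' R₁ U₁ hR₁ hU₁ le_rfl
      refine hble2.tail ⟨σ i, cs.isReflection_simple i, ?_, hdesc⟩
      rw [mul_assoc, cs.simple_mul_simple_self, mul_one]
  refine ⟨hA, hB, ?_⟩
  intro R U hR hUsub hlen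
  rcases R.eq_nil_or_concat with rfl | ⟨R₁, i, rfl⟩
  · rw [List.sublist_nil.mp hUsub]
    exact ble.refl cs _
  · rw [List.concat_eq_append] at hUsub hR hlen ⊢
    have hR₁ : cs.IsReduced R₁ := by
      have := hR.take R₁.length
      rwa [List.take_left] at this
    have hR₁len : R₁.length = ℓ (πw R₁) := hR₁.symm
    have hRlen : ℓ (πw (R₁ ++ [i])) = R₁.length + 1 := by
      have : ℓ (πw (R₁ ++ [i])) = (R₁ ++ [i]).length := hR
      simpa using this
    have hπR : πw (R₁ ++ [i]) = πw R₁ * σ i := by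
      rw [cs.wordProd_append, cs.wordProd_singleton]
    have hC' := (ih R₁.length (by simp at hlen; omega)).2.2
    rcases List.sublist_append_iff.mp hUsub with ⟨U₁, U₂, hUeq, hU₁, hU₂⟩
    rcases List.sublist_singleton.mp hU₂ with h2 | h2
    · -- U inside R₁
      have h1 : ble cs (πw U) (πw R₁) := by
        rw [hUeq, h2, List.append_nil]
        exact hC' R₁ U₁ hR₁ hU₁ le_rfl
      refine h1.tail ⟨σ i, cs.isReflection_simple i, hπR, ?_⟩
      omega
    · -- U = U₁ ++ [i]
      subst h2
      have h1 : ble cs (πw U₁) (πw R₁) := hC' R₁ U₁ hR₁ hU₁ le_rfl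
      have hπU : πw U = πw U₁ * σ i := by
        rw [hUeq, cs.wordProd_append, cs.wordProd_singleton]
      rcases lt_or_ge (ℓ (πw U₁)) (ℓ (πw U₁ * σ i)) with husc | hdesc
      · have := hA (πw U₁) (πw R₁) i h1 (by rw [← hπR]; omega)
          (by rw [← hπR]; simp only [List.length_append, List.length_singleton] at hlen; omega)
        rw [hπU, hπR]
        exact this
      · have hne := cs.length_mul_simple_ne (πw U₁) i
        have hstep : ble cs (πw U) (πw U₁) := by
          rw [hπU]
          exact ble_of_mul_simple_lt cs (by omega)
        refine ((hstep.trans h1).tail ⟨σ i, cs.isReflection_simple i, hπR, by omega⟩)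



lemma ble_of_sublist {R U : List B} (hR : cs.IsReduced R) (hU : U.Sublist R) :
    ble cs (πw U) (πw R) := (bruhat_triple cs R.length).2.2 R U hR hU le_rfl

/-! ### Demazure product lemmas -/

lemma demazure_concat (L : List B) (i : B) :
    demazure cs (L ++ [i]) = if ℓ (demazure cs L) < ℓ (demazure cs L * σ i)
      then demazure cs L * σ i else demazure cs L := by
  simp [demazure, List.foldl_append]
  exact if_congr Iff.rfl rfl rfl

lemma ble_wordProd_demazure (Q : List B) :
    ∀ U : List B, U.Sublist Q → ble cs (πw U) (demazure cs Q) := by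
  induction Q using List.reverseRecOn with
  | nil =>
    intro U hU
    rw [List.sublist_nil.mp hU]
    show ble cs (πw []) (demazure cs [])
    rw [cs.wordProd_nil]
    exact ble.refl cs 1
  | append_singleton L i ihL =>
    intro U hU
    rcases List.sublist_append_iff.mp hU with ⟨U₁, U₂, hUeq, hU₁, hU₂⟩
    rcases List.sublist_singleton.mp hU₂ with h2 | h2
    · have h1 : ble cs (πw U) (demazure cs L) := by
        rw [hUeq, h2, List.append_nil]
        exact ihL U₁ hU₁
      rw [demazure_concat]
      split_ifs with hc
      · exact h1.trans (ble_mul_simple_of_lt cs hc)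
      · exact h1
    · have h1 : ble cs (πw U₁) (demazure cs L) := ihL U₁ hU₁
      have hπU : πw U = πw U₁ * σ i := by
        rw [hUeq, h2, cs.wordProd_append, cs.wordProd_singleton]
      rw [demazure_concat, hπU]
      rcases lt_or_ge (ℓ (πw U₁)) (ℓ (πw U₁ * σ i)) with husc | hdesc
      · split_ifs with hc
        · exact (bruhat_triple cs (ℓ (demazure cs L * σ i))).1 (πw U₁) (demazure cs L) i
            h1 hc le_rfl
        · have hne := cs.length_mul_simple_ne (demazure cs L) i
          exact (bruhat_triple cs (ℓ (demazure cs L))).2.1 (πw U₁) (demazure cs L) i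
            h1 husc (by omega) le_rfl
      · have hne := cs.length_mul_simple_ne (πw U₁) i
        have hdown : ble cs (πw U₁ * σ i) (πw U₁) := ble_of_mul_simple_lt cs (by omega)
        have h2' := hdown.trans h1
        split_ifs with hc
        · exact h2'.trans (ble_mul_simple_of_lt cs hc)
        · exact h2'

lemma length_le_demazure_of_sublist {Q U : List B} (hU : U.Sublist Q) :
    ℓ (πw U) ≤ ℓ (demazure cs Q) :=
  (ble_wordProd_demazure cs Q U hU).length_le cs



/-! ### Inversion counting and the length formula for the longest element -/

lemma card_inversions [Fintype W] (w : W) :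
    (Finset.univ.filter (fun t => cs.IsRightInversion w t)).card = ℓ w := by
  obtain ⟨R, hR, hRw⟩ := cs.exists_reduced_word' w
  have hset : Finset.univ.filter (fun t => cs.IsRightInversion w t) = (ris R).toFinset := by
    ext t
    simp only [Finset.mem_filter, Finset.mem_univ, true_and, List.mem_toFinset]
    constructor
    · intro ht
      apply strongExchange cs ht.1
      rw [← hRw]
      exact ht.2
    · intro ht
      rw [hRw]
      exact cs.isRightInversion_of_mem_rightInvSeq hR ht
  rw [hset, List.toFinset_card_of_nodup hR.nodup_rightInvSeq, cs.length_rightInvSeq, hRw]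
  exact hR.symm

lemma inversion_cocycle {v x : W} {t : W} (ht : cs.IsReflection t) :
    (cs.IsRightInversion (v * x) t ↔
      ¬ (cs.IsRightInversion x t ↔ cs.IsRightInversion v (x * t * x⁻¹))) := by
  obtain ⟨V, hV, hVv⟩ := cs.exists_reduced_word' v
  obtain ⟨X, hX, hXx⟩ := cs.exists_reduced_word' x
  have hprod : πw (V ++ X) = v * x := by rw [cs.wordProd_append, ← hVv, ← hXx]
  have htc : cs.IsReflection (x * t * x⁻¹) := ht.conj x
  have h1 : cs.IsRightInversion (v * x) t ↔ Odd ((ris (V ++ X)).count t) := by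
    rw [odd_count_iff_inversion cs ht, hprod]
    exact ⟨fun h => h.2, fun h => ⟨ht, h⟩⟩
  have h2 : cs.IsRightInversion x t ↔ Odd ((ris X).count t) := by
    rw [odd_count_iff_inversion cs ht, hXx]
    exact ⟨fun h => h.2, fun h => ⟨ht, h⟩⟩
  have h3 : cs.IsRightInversion v (x * t * x⁻¹)
      ↔ Odd (((ris V).map (fun r => (πw X)⁻¹ * r * πw X)).count t) := by
    rw [count_map_conj_eq_countP, ← hXx]
    have : (ris V).countP (fun r => x * t * x⁻¹ == r)
        = (ris V).count (x * t * x⁻¹) := by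
      rw [List.count_eq_countP]
      refine List.countP_congr fun r _ => ?_
      simp only [beq_iff_eq]
      exact eq_comm
    rw [this, odd_count_iff_inversion cs htc, hVv]
    exact ⟨fun h => h.2, fun h => ⟨htc, h⟩⟩
  rw [h1, h2, h3, ris_append, List.count_append, Nat.odd_add]
  rw [← Nat.not_odd_iff_even]
  tauto



lemma length_add_length_eq_of_longest [Finite W] {w₀ : W} (hw₀ : IsLongest cs w₀) (v : W) :
    ℓ v + ℓ (v⁻¹ * w₀) = ℓ w₀ := by
  letI := Fintype.ofFinite W
  set x := v⁻¹ * w₀ with hx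
  have hvx : v * x = w₀ := by rw [hx]; group
  have hall : ∀ t : W, cs.IsReflection t → cs.IsRightInversion w₀ t := by
    intro t ht
    refine ⟨ht, ?_⟩
    have h1 := hw₀ (w₀ * t)
    have h2 := ht.length_mul_left_ne w₀
    omega
  have hkey : ∀ t : W, cs.IsReflection t →
      (cs.IsRightInversion x t ↔ ¬ cs.IsRightInversion v (x * t * x⁻¹)) := by
    intro t ht
    have := (inversion_cocycle cs (v := v) (x := x) ht).mp (by rw [hvx]; exact hall t ht)
    tauto
  have hT : (Finset.univ.filter (fun t => cs.IsReflection t)).card = ℓ w₀ := by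
    rw [← card_inversions cs w₀]
    congr 1
    ext t
    simp only [Finset.mem_filter, Finset.mem_univ, true_and]
    exact ⟨fun h => hall t h, fun h => h.1⟩
  have hsplit := Finset.card_filter_add_card_filter_not
    (s := Finset.univ.filter (fun t => cs.IsReflection t))
    (p := fun t => cs.IsRightInversion x t)
  have hfirst : ((Finset.univ.filter (fun t => cs.IsReflection t)).filter
      (fun t => cs.IsRightInversion x t)).card = ℓ x := by
    rw [← card_inversions cs x]
    congr 1
    ext t
    simp only [Finset.mem_filter, Finset.mem_univ, true_and]
    exact ⟨fun h => h.2, fun h => ⟨h.1, h⟩⟩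
  have hsecond : ((Finset.univ.filter (fun t => cs.IsReflection t)).filter
      (fun t => ¬ cs.IsRightInversion x t)).card = ℓ v := by
    rw [← card_inversions cs v]
    refine Finset.card_bij' (fun t _ => x * t * x⁻¹) (fun s _ => x⁻¹ * s * x) ?_ ?_ ?_ ?_
    · intro t ht
      simp only [Finset.mem_filter, Finset.mem_univ, true_and] at ht ⊢
      exact not_not.mp (fun hn => ht.2 ((hkey t ht.1).mpr hn))
    · intro s hs
      simp only [Finset.mem_filter, Finset.mem_univ, true_and] at hs ⊢
      have hrefl : cs.IsReflection (x⁻¹ * s * x) := by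
        have := hs.1.conj x⁻¹
        rwa [inv_inv] at this
      refine ⟨hrefl, fun hinv => ?_⟩
      have hys : x * (x⁻¹ * s * x) * x⁻¹ = s := by group
      exact ((hkey _ hrefl).mp hinv) (by rw [hys]; exact hs)
    · intro t _
      group
    · intro s _
      group
  omega



/-! ### Demazure product of an appended reduced word -/

lemma demazure_append_foldl (Q R : List B) :
    demazure cs (Q ++ R) = R.foldl
      (fun w i => if ℓ w < ℓ (w * σ i) then w * σ i else w) (demazure cs Q) := by
  simp [demazure, List.foldl_append]

lemma foldl_eq_mul_of_increasing (r : List B) : ∀ v : W,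
    (∀ k, k < r.length → ℓ (v * πw (r.take (k+1))) = ℓ (v * πw (r.take k)) + 1) →
    r.foldl (fun w i => if ℓ w < ℓ (w * σ i) then w * σ i else w) v = v * πw r := by
  induction r with
  | nil => intro v _; simp
  | cons a r' ih =>
    intro v hcond
    have h0 := hcond 0 (by simp)
    have h0' : ℓ (v * σ a) = ℓ v + 1 := by
      simpa [cs.wordProd_cons] using h0
    rw [List.foldl_cons, if_pos (by omega)]
    rw [ih (v * σ a) ?_, cs.wordProd_cons, ← mul_assoc]
    intro k hk
    have := hcond (k+1) (by simpa using Nat.succ_lt_succ hk)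
    simpa [List.take_succ_cons, cs.wordProd_cons, mul_assoc] using this

lemma demazure_append_eq_longest [Finite W] {w₀ : W} (hw₀ : IsLongest cs w₀)
    (Q r : List B) (hr : cs.IsReduced r)
    (hrprod : πw r = (demazure cs Q)⁻¹ * w₀) :
    demazure cs (Q ++ r) = w₀ := by
  set p := demazure cs Q with hp
  have hL1 : ℓ p + ℓ (p⁻¹ * w₀) = ℓ w₀ := length_add_length_eq_of_longest cs hw₀ p
  have hlenr : r.length = ℓ (p⁻¹ * w₀) := by rw [← hrprod]; exact hr.symm
  have hclaim : ∀ k, k ≤ r.length → ℓ (p * πw (r.take k)) = ℓ p + k := by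
    intro k hk
    have e1 : πw (r.take k) * πw (r.drop k) = p⁻¹ * w₀ := by
      rw [← cs.wordProd_append, List.take_append_drop, hrprod]
    have e2 : (p * πw (r.take k)) * πw (r.drop k) = w₀ := by
      rw [mul_assoc, e1, ← mul_assoc, mul_inv_cancel, one_mul]
    have u1 : ℓ (p * πw (r.take k)) ≤ ℓ p + k := by
      have := cs.length_mul_le p (πw (r.take k))
      have h2 := cs.length_wordProd_le (r.take k)
      have h3 : (r.take k).length = k := by
        rw [List.length_take]
        omega
      omega
    have u2 : ℓ (πw (r.drop k)) ≤ r.length - k := by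
      have := cs.length_wordProd_le (r.drop k)
      have h3 : (r.drop k).length = r.length - k := by rw [List.length_drop]
      omega
    have l1 : ℓ w₀ ≤ ℓ (p * πw (r.take k)) + ℓ (πw (r.drop k)) := by
      rw [← e2]
      exact cs.length_mul_le _ _
    omega
  rw [demazure_append_foldl, foldl_eq_mul_of_increasing cs r (demazure cs Q) ?_]
  · rw [← hp, hrprod, ← mul_assoc, mul_inv_cancel, one_mul]
  · intro k hk
    rw [← hp, hclaim (k+1) (by omega), hclaim k (by omega)]
    omega

/-! ### Complement lemmas -/

/-- Like `complement`, but with positions starting at `n`. -/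
def compFrom (n : ℕ) (L : List B) (F : Finset ℕ) : List B :=
  (((L.zipIdx n).map Prod.swap).filter (fun p => p.1 ∉ F)).map Prod.snd

lemma complement_eq_compFrom (L : List B) (F : Finset ℕ) :
    complement L F = compFrom 0 L F := by
  simp [complement, compFrom]

lemma compFrom_sublist (n : ℕ) (L : List B) (F : Finset ℕ) :
    (compFrom n L F).Sublist L := by
  have h1 := (List.filter_sublist (p := fun p : ℕ × B => decide (p.1 ∉ F))
    (l := (L.zipIdx n).map Prod.swap)).map Prod.snd
  simpa [compFrom, List.map_map, Function.comp_def, List.zipIdx_map_fst] using h1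

lemma complement_sublist (L : List B) (F : Finset ℕ) : (complement L F).Sublist L := by
  rw [complement_eq_compFrom]; exact compFrom_sublist 0 L F

lemma compFrom_append (n : ℕ) (A C : List B) (F : Finset ℕ) :
    compFrom n (A ++ C) F = compFrom n A F ++ compFrom (n + A.length) C F := by
  simp [compFrom, List.zipIdx_append, List.filter_append]

lemma compFrom_eq_self {F : Finset ℕ} : ∀ (n : ℕ) (L : List B), (∀ q ∈ F, q < n) →
    compFrom n L F = L := by
  intro n L
  induction L generalizing n with
  | nil => intro _; simp [compFrom]
  | cons a L' ih =>
    intro h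
    have hn : n ∉ F := fun hmem => absurd (h n hmem) (lt_irrefl n)
    have h1 : compFrom n (a :: L') F = a :: compFrom (n+1) L' F := by
      simp [compFrom, List.zipIdx_cons, List.filter_cons, hn]
    rw [h1, ih (n+1) (fun q hq => Nat.lt_succ_of_lt (h q hq))]

lemma compFrom_sublist_eraseIdx {F : Finset ℕ} {q₀ : ℕ} (hq : q₀ ∈ F) :
    ∀ (n : ℕ) (L : List B), n ≤ q₀ →
    (compFrom n L F).Sublist (L.eraseIdx (q₀ - n)) := by
  intro n L
  induction L generalizing n with
  | nil => intro _; simp [compFrom]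
  | cons a L' ih =>
    intro hn
    by_cases hmem : n ∈ F
    · have h1 : compFrom n (a :: L') F = compFrom (n+1) L' F := by
        simp [compFrom, List.zipIdx_cons, List.filter_cons, hmem]
      rw [h1]
      rcases eq_or_lt_of_le hn with heq | hlt
      · subst heq
        rw [Nat.sub_self, List.eraseIdx_cons_zero]
        exact (compFrom_sublist (n+1) L' F)
      · have h2 : q₀ - n = (q₀ - (n+1)) + 1 := by omega
        rw [h2, List.eraseIdx_cons_succ]
        exact (ih (n+1) hlt).cons a
    · have hne : q₀ ≠ n := fun h => hmem (h ▸ hq)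
      have h1 : compFrom n (a :: L') F = a :: compFrom (n+1) L' F := by
        simp [compFrom, List.zipIdx_cons, List.filter_cons, hmem]
      have h2 : q₀ - n = (q₀ - (n+1)) + 1 := by omega
      rw [h1, h2, List.eraseIdx_cons_succ]
      exact (ih (n+1) (by omega)).cons₂ a

lemma complement_append_of_subset_range {Q r : List B} {F : Finset ℕ}
    (hF : F ⊆ Finset.range Q.length) :
    complement (Q ++ r) F = complement Q F ++ r := by
  rw [complement_eq_compFrom, compFrom_append, ← complement_eq_compFrom]
  congr 1
  exact compFrom_eq_self (0 + Q.length) r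
    (fun q hq => by have := hF hq; rw [Finset.mem_range] at this; omega)

lemma isReduced_append_split {M₁ M₂ : List B} (h : cs.IsReduced (M₁ ++ M₂)) :
    cs.IsReduced M₁ ∧ cs.IsReduced M₂ := by
  constructor
  · have := h.take M₁.length
    rwa [List.take_left] at this
  · have := h.drop M₁.length
    rwa [List.drop_left] at this


/-- appending a reduced word for `π⁻¹w₀` turns `Δ(Q,π)` into the
isomorphic complex `Δ(Q', w₀)` via the natural inclusion of positions. -/
theorem append_reduced_word_iso [Finite W] (w₀ : W) (hw₀ : IsLongest cs w₀)
    (Q r : List B) (π : W) (hQ : demazure cs Q = π)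
    (hr : cs.IsReduced r) (hrprod : cs.wordProd r = π⁻¹ * w₀) :
    demazure cs (Q ++ r) = w₀ ∧
    (∀ F : Finset ℕ, IsFace cs (Q ++ r) w₀ F → F ⊆ Finset.range Q.length) ∧
    (∀ F : Finset ℕ, F ⊆ Finset.range Q.length →
      (IsFace cs Q π F ↔ IsFace cs (Q ++ r) w₀ F)) := by
  have hd : demazure cs (Q ++ r) = w₀ :=
    demazure_append_eq_longest cs hw₀ Q r hr (by rw [hQ]; exact hrprod)
  have hL1 : ℓ π + ℓ (π⁻¹ * w₀) = ℓ w₀ := length_add_length_eq_of_longest cs hw₀ π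
  have hlenr : r.length = ℓ (π⁻¹ * w₀) := by rw [← hrprod]; exact hr.symm
  have hcore : ∀ C r'' Mw : List B, C.Sublist Q → r''.Sublist r → Mw.Sublist (C ++ r'') →
      cs.IsReduced Mw → cs.wordProd Mw = w₀ →
      r''.length = r.length ∧ ∃ M₁, M₁.Sublist C ∧ cs.IsReduced M₁ ∧ cs.wordProd M₁ = π := by
    intro C r'' Mw hC hr'' hMsub hMred hMprod
    obtain ⟨M₁, M₂, rfl, hM₁, hM₂⟩ := List.sublist_append_iff.mp hMsub
    obtain ⟨hM₁red, hM₂red⟩ := isReduced_append_split cs hMred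
    have hlenM : (M₁ ++ M₂).length = ℓ w₀ := by rw [← hMprod]; exact hMred.symm
    rw [List.length_append] at hlenM
    have hb1 : ℓ (πw M₁) ≤ ℓ π := by
      rw [← hQ]
      exact length_le_demazure_of_sublist cs (hM₁.trans hC)
    have hM₁len : M₁.length = ℓ (πw M₁) := hM₁red.symm
    have hM₂lenle : M₂.length ≤ r''.length := hM₂.length_le
    have hrle : r''.length ≤ r.length := hr''.length_le
    have heqr : r''.length = r.length := by omega
    have hM₂eq : M₂ = r'' := hM₂.eq_of_length (by omega)
    have hr''eq : r'' = r := hr''.eq_of_length heqr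
    refine ⟨heqr, M₁, hM₁, hM₁red, ?_⟩
    have hsplit : πw M₁ * πw M₂ = w₀ := by rw [← cs.wordProd_append, hMprod]
    rw [hM₂eq, hr''eq, hrprod] at hsplit
    have hπfinal : π * (π⁻¹ * w₀) = w₀ := by rw [← mul_assoc, mul_inv_cancel, one_mul]
    exact mul_right_cancel (hsplit.trans hπfinal.symm)
  refine ⟨hd, ?_, ?_⟩
  · -- any face of the big complex is supported on positions of Q
    intro F hF q hq
    rw [Finset.mem_range]
    by_contra hqQ
    push_neg at hqQ
    obtain ⟨hFrange, Mw, hMsub, hMred, hMprod⟩ := hF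
    have hqlt : q < Q.length + r.length := by
      have := hFrange hq
      rw [Finset.mem_range, List.length_append] at this
      omega
    have hsub2 : (complement (Q ++ r) F).Sublist (Q ++ r.eraseIdx (q - Q.length)) := by
      rw [complement_eq_compFrom, compFrom_append]
      refine List.Sublist.append (compFrom_sublist 0 Q F) ?_
      simpa using compFrom_sublist_eraseIdx hq Q.length r (by omega)
    have hcore' := (hcore Q (r.eraseIdx (q - Q.length)) Mw (List.Sublist.refl Q)
      (List.eraseIdx_sublist r _) (hMsub.trans hsub2) hMred hMprod).1
    rw [List.length_eraseIdx, if_pos (by omega)] at hcore'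
    omega
  · intro F hFQ
    constructor
    · rintro ⟨_, L', hL'sub, hL'red, hL'prod⟩
      have h1 : L'.length = ℓ π := by rw [← hL'prod]; exact hL'red.symm
      refine ⟨?_, ?_⟩
      · intro q hq
        have := hFQ hq
        rw [Finset.mem_range] at this ⊢
        rw [List.length_append]
        omega
      · refine ⟨L' ++ r, ?_, ?_, ?_⟩
        · rw [complement_append_of_subset_range hFQ]
          exact hL'sub.append (List.Sublist.refl r)
        · show ℓ (πw (L' ++ r)) = (L' ++ r).length
          rw [cs.wordProd_append, hL'prod, hrprod, ← mul_assoc, mul_inv_cancel, one_mul,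
            List.length_append]
          omega
        · rw [cs.wordProd_append, hL'prod, hrprod, ← mul_assoc, mul_inv_cancel, one_mul]
    · rintro ⟨_, Mw, hMsub, hMred, hMprod⟩
      rw [complement_append_of_subset_range hFQ] at hMsub
      obtain ⟨_, M₁, hM₁sub, hM₁red, hM₁prod⟩ := hcore (complement Q F) r Mw
        (complement_sublist Q F) (List.Sublist.refl r) hMsub hMred hMprod
      exact ⟨hFQ, M₁, hM₁sub, hM₁red, hM₁prod⟩

end SubwordComplex
end

section
/- Let (W,S) be a Coxeter system, Q a word with δ(Q) = π, F a facet of Δ(Q,π), and for each position q define the root r_F(q) = w_q(α_q), where w_q is the product of the letters of Q \ F occurring strictly before position q and α_q is the simple root of the letter at q. If F and F' = (F \ {q}) ∪ {q'} are adjacent facets, then r_F(q') = ± r_F(q); more precisely, q' is the unique position not in F with r_F(q') ∈ {± r_F(q)}, with sign + if q' lies to the right of q in Q and sign − otherwise. -/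
set_option linter.unusedSectionVars false
set_option maxHeartbeats 1000000


open List

namespace SubwordComplex

variable {B : Type*} [DecidableEq B] [Inhabited B] {W : Type*} [Group W]
variable {M : CoxeterMatrix B} (cs : CoxeterSystem M W)

section generic
variable {α β : Type*} [DecidableEq β]
variable {α β : Type*} [DecidableEq β]

theorem filter_key_mem (f : α → β) {l l' : List α} (h : l'.Sublist l) (hn : (l.map f).Nodup) :
    l.filter (fun a => f a ∈ l'.map f) = l' := by
  induction h with
  | slnil => simp
  | cons a h ih =>
    rw [map_cons, nodup_cons] at hn
    rw [filter_cons_of_neg, ih hn.2]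
    simp only [decide_eq_true_eq]
    intro hmem
    exact hn.1 ((h.map f).mem hmem)
  | @cons_cons l₁ l₂ a h ih =>
    rw [map_cons, nodup_cons] at hn
    rw [filter_cons_of_pos (by simp)]
    have hc : ∀ x ∈ l₂, (fun x => decide (f x ∈ map f (a :: l₁))) x
        = (fun x => decide (f x ∈ map f l₁)) x := fun x hx => by
      simp only [map_cons, mem_cons, decide_eq_decide]
      exact ⟨fun h' => h'.resolve_left (fun he => hn.1 (he ▸ mem_map_of_mem (f := f) hx)), Or.inr⟩
    rw [filter_congr hc, ih hn.2]

theorem eraseIdx_split (X Z : List α) (a : α) : (X ++ a :: Z).eraseIdx X.length = X ++ Z := by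
  induction X with
  | nil => rfl
  | cons x X ih => simpa [eraseIdx_cons_succ] using ih

theorem take_split (X Z : List α) (a : α) : (X ++ a :: Z).take (X.length + 1) = X ++ [a] := by
  rw [take_append, take_of_length_le (by omega), Nat.add_sub_cancel_left, take_succ_cons, take_zero]

theorem split_sorted {B : Type*} [DecidableEq B] :
    ∀ {l : List (ℕ × B)}, l.Pairwise (fun a b => a.1 < b.1) → ∀ {r : ℕ} {x : B}, (r, x) ∈ l →
    ∃ A Bx, l = A ++ (r, x) :: Bx ∧ (∀ a ∈ A, a.1 < r) ∧ (∀ b ∈ Bx, r < b.1) := by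
  intro l hl r x hm
  induction l with
  | nil => simp at hm
  | cons a l ih =>
    rw [pairwise_cons] at hl
    rcases eq_or_ne a (r, x) with rfl | hne
    · exact ⟨[], l, by simp, by simp, fun b hb => hl.1 b hb⟩
    · have hm' : (r, x) ∈ l := (mem_cons.mp hm).resolve_left (fun h => hne h.symm)
      obtain ⟨A, Bx, h1, h2, h3⟩ := ih hl.2 hm'
      refine ⟨a :: A, Bx, by rw [h1, cons_append], ?_, h3⟩
      intro b hb
      rcases mem_cons.mp hb with rfl | hb
      · exact hl.1 _ hm'
      · exact h2 b hb
end generic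

theorem enum_map_fst (Q : List B) :
    ((Q.zipIdx.map Prod.swap).map Prod.fst) = range Q.length := by
  rw [map_map]
  show map Prod.snd (zipIdx Q 0) = _
  rw [zipIdx_map_snd, range_eq_range']

theorem mem_enum_iff_getElem? {Q : List B} {i : ℕ} {x : B} :
    (i, x) ∈ (Q.zipIdx.map Prod.swap) ↔ Q[i]? = some x := by
  rw [mem_map]
  constructor
  · rintro ⟨⟨y, j⟩, h, he⟩
    simp only [Prod.swap_prod_mk, Prod.mk.injEq] at he
    obtain ⟨rfl, rfl⟩ := he
    exact mem_zipIdx_iff_getElem?.mp h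
  · intro h
    exact ⟨(x, i), mem_zipIdx_iff_getElem?.mpr h, rfl⟩

theorem enum_sorted (Q : List B) : (Q.zipIdx.map Prod.swap).Pairwise (fun a b => a.1 < b.1) := by
  have h : ((Q.zipIdx.map Prod.swap).map Prod.fst).Pairwise (· < ·) := by
    rw [enum_map_fst]; exact pairwise_lt_range
  exact pairwise_map.mp h

theorem filter_and_lt (Q : List B) (G : Finset ℕ) (r : ℕ) :
    (Q.zipIdx.map Prod.swap).filter (fun p => p.1 ∉ G ∧ p.1 < r)
      = ((Q.zipIdx.map Prod.swap).filter (fun p => p.1 ∉ G)).filter (fun p => p.1 < r) := by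
  rw [filter_filter]
  exact (filter_congr (fun x _ => by simp [Bool.decide_and, Bool.and_comm])).symm

theorem complement_split (Q : List B) (G : Finset ℕ) {r : ℕ} (hr : r < Q.length) (hrG : r ∉ G) :
    ∃ A Bx, (Q.zipIdx.map Prod.swap).filter (fun p => p.1 ∉ G) = A ++ (r, Q.getD r default) :: Bx ∧
      (∀ a ∈ A, a.1 < r) ∧ (∀ b ∈ Bx, r < b.1) ∧
      A = (Q.zipIdx.map Prod.swap).filter (fun p => p.1 ∉ G ∧ p.1 < r) ∧
      (Q.zipIdx.map Prod.swap).filter (fun p => p.1 ∉ insert r G) = A ++ Bx := by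
  have hsorted : ((Q.zipIdx.map Prod.swap).filter (fun p => p.1 ∉ G)).Pairwise (fun a b => a.1 < b.1) :=
    (enum_sorted Q).sublist filter_sublist
  have hmem : (r, Q.getD r default) ∈ (Q.zipIdx.map Prod.swap).filter (fun p => p.1 ∉ G) := by
    rw [mem_filter]
    refine ⟨?_, by simpa using hrG⟩
    rw [mem_enum_iff_getElem?]
    rw [getElem?_eq_getElem hr, getD_eq_getElem Q default hr]
  obtain ⟨A, Bx, h1, h2, h3⟩ := split_sorted hsorted hmem
  refine ⟨A, Bx, h1, h2, h3, ?_, ?_⟩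
  · rw [filter_and_lt, h1, filter_append, filter_cons_of_neg (by simp),
      filter_eq_self.mpr (fun a ha => by simpa using h2 a ha),
      filter_eq_nil_iff.mpr (fun b hb => by simpa using Nat.lt_asymm (h3 b hb)), append_nil]
  · have heq : (Q.zipIdx.map Prod.swap).filter (fun p => p.1 ∉ insert r G)
        = ((Q.zipIdx.map Prod.swap).filter (fun p => p.1 ∉ G)).filter (fun p => p.1 ≠ r) := by
      rw [filter_filter]
      apply filter_congr
      intro x _
      simp only [Finset.mem_insert, not_or, decide_not, Bool.decide_and]
    rw [heq, h1, filter_append, filter_cons_of_neg (by simp)]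
    congr 1
    · exact filter_eq_self.mpr (fun a ha => by simpa using Nat.ne_of_lt (h2 a ha))
    · exact filter_eq_self.mpr (fun b hb => by simpa using (Nat.ne_of_lt (h3 b hb)).symm)

theorem facet_complement {Q : List B} {π : W} {F : Finset ℕ} (hF : IsFacet cs Q π F) :
    cs.IsReduced (complement Q F) ∧ cs.wordProd (complement Q F) = π := by
  obtain ⟨⟨hFr, L', hsub, hred, hprod⟩, hmax⟩ := hF
  rw [complement] at hsub
  obtain ⟨l', hl'sub, rfl⟩ := sublist_map_iff.mp hsub
  obtain ⟨G, hG⟩ : ∃ G : Finset ℕ, G = (Finset.range Q.length).filter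
      (fun i => i ∉ l'.map Prod.fst) := ⟨_, rfl⟩
  have hsubenum : l'.Sublist (Q.zipIdx.map Prod.swap) := hl'sub.trans filter_sublist
  have hcompG : complement Q G = l'.map Prod.snd := by
    rw [complement]
    congr 1
    have hcong : ∀ x ∈ (Q.zipIdx.map Prod.swap), (decide (x.1 ∉ G)) = (decide (x.1 ∈ l'.map Prod.fst)) := by
      intro x hx
      subst hG
      have hxlen : x.1 < Q.length := by
        have := mem_map_of_mem (f := Prod.fst) hx
        rw [enum_map_fst] at this
        exact mem_range.mp this
      rw [decide_eq_decide]
      simp [Finset.mem_filter, Finset.mem_range, hxlen]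
    rw [filter_congr hcong]
    exact filter_key_mem Prod.fst hsubenum (by rw [enum_map_fst]; exact nodup_range)
  have hFG : F ⊆ G := by
    subst hG
    intro i hi
    rw [Finset.mem_filter, Finset.mem_range]
    refine ⟨Finset.mem_range.mp (hFr hi), ?_⟩
    intro hmem
    obtain ⟨p, hp, hpi⟩ := mem_map.mp hmem
    have := hl'sub.mem hp
    rw [mem_filter] at this
    have h2 : p.1 ∉ F := by simpa using this.2
    rw [hpi] at h2
    exact h2 hi
  have hfaceG : IsFace cs Q π G := by
    refine ⟨by rw [hG]; exact Finset.filter_subset _ _, l'.map Prod.snd, ?_, hred, hprod⟩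
    rw [hcompG]
  have hGF : G = F := hmax G hfaceG hFG
  have : complement Q F = l'.map Prod.snd := by rw [← hGF, hcompG]
  rw [this]
  exact ⟨hred, hprod⟩
theorem lis_getD_split (X Z : List B) (a : B) :
    (cs.leftInvSeq (X ++ a :: Z)).getD X.length 1
      = cs.wordProd X * cs.simple a * (cs.wordProd X)⁻¹ := by
  have hget : (X ++ a :: Z)[X.length]? = some a := by
    rw [getElem?_append_right le_rfl, Nat.sub_self, getElem?_cons_zero]
  rw [CoxeterSystem.getD_leftInvSeq, hget, take_left]
  simp

theorem relIdx_lt (Q : List B) (F : Finset ℕ) {p1 p2 : ℕ} (h12 : p1 < p2) (h1F : p1 ∉ F)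
    (h1len : p1 < Q.length) :
    ((Q.zipIdx.map Prod.swap).filter (fun x => x.1 ∉ F ∧ x.1 < p1)).length
      < ((Q.zipIdx.map Prod.swap).filter (fun x => x.1 ∉ F ∧ x.1 < p2)).length := by
  obtain ⟨A, Bx, h1, h2, h3, h4, h5⟩ := complement_split Q F h1len h1F
  rw [← h4, filter_and_lt, h1, filter_append, filter_cons_of_pos (by simpa using h12),
    filter_eq_self.mpr (fun a ha => by simpa using (h2 a ha).trans h12)]
  simp only [length_append, length_cons]
  omega


/-- in a flip, the entering position `q'` is the unique position outside
`F` whose root equals `± r_F(q)`, with sign `+` exactly if `q'` is to the right of `q`. -/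
theorem flip_root_characterization (Q : List B) (π : W) (hQ : demazure cs Q = π)
    (F : Finset ℕ) (hF : IsFacet cs Q π F) (q q' : ℕ) (hq : q ∈ F)
    (hq'mem : q' ∈ Finset.range Q.length) (hq'F : q' ∉ F)
    (hF' : IsFacet cs Q π (insert q' (F.erase q))) :
    (rootF cs Q F q' = rootF cs Q F q ∨ rootF cs Q F q' = negRoot (rootF cs Q F q)) ∧
    (∀ p ∈ Finset.range Q.length, p ∉ F →
      (rootF cs Q F p = rootF cs Q F q ∨ rootF cs Q F p = negRoot (rootF cs Q F q)) →
      p = q') ∧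
    (q < q' → rootF cs Q F q' = rootF cs Q F q) ∧
    (q' < q → rootF cs Q F q' = negRoot (rootF cs Q F q)) := by
  clear hQ
  have hqlen : q < Q.length := Finset.mem_range.mp (hF.1.1 hq)
  have hq'len : q' < Q.length := Finset.mem_range.mp hq'mem
  have hqq' : q ≠ q' := fun h => hq'F (h ▸ hq)
  obtain ⟨hcFred, hcFprod⟩ := facet_complement cs hF
  obtain ⟨hcF'red, hcF'prod⟩ := facet_complement cs hF'
  obtain ⟨A₁, B₁, e1, lt1, gt1, f1, i1⟩ :=
    complement_split Q (F.erase q) hqlen (Finset.notMem_erase q F)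
  obtain ⟨A₂, B₂, e2, lt2, gt2, f2, i2⟩ :=
    complement_split Q (F.erase q) hq'len (fun h => hq'F (Finset.mem_of_mem_erase h))
  obtain ⟨A₃, B₃, e3, lt3, gt3, f3, i3⟩ := complement_split Q F hq'len hq'F
  rw [Finset.insert_erase hq] at i1
  -- basic word identities
  have hL1 : complement Q (F.erase q)
      = map Prod.snd A₁ ++ Q.getD q default :: map Prod.snd B₁ := by
    rw [complement, e1, map_append, map_cons]
  have hL2 : complement Q (F.erase q)
      = map Prod.snd A₂ ++ Q.getD q' default :: map Prod.snd B₂ := by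
    rw [complement, e2, map_append, map_cons]
  have hcFeq : complement Q F = map Prod.snd A₁ ++ map Prod.snd B₁ := by
    rw [complement, i1, map_append]
  have hcFeq3 : complement Q F
      = map Prod.snd A₃ ++ Q.getD q' default :: map Prod.snd B₃ := by
    rw [complement, e3, map_append, map_cons]
  have hcF'eq : complement Q (insert q' (F.erase q))
      = map Prod.snd A₂ ++ map Prod.snd B₂ := by
    rw [complement, i2, map_append]
  -- prefix products
  have f1' : A₁ = (Q.zipIdx.map Prod.swap).filter (fun p => p.1 ∉ F ∧ p.1 < q) := by
    rw [f1]
    apply filter_congr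
    intro x _
    rw [decide_eq_decide]
    constructor
    · rintro ⟨h1, h2⟩
      exact ⟨fun hf => h1 (Finset.mem_erase.mpr ⟨Nat.ne_of_lt h2, hf⟩), h2⟩
    · rintro ⟨h1, h2⟩
      exact ⟨fun hf => h1 (Finset.mem_of_mem_erase hf), h2⟩
  have hpre_q : prefixProd cs Q F q = cs.wordProd (map Prod.snd A₁) := by
    rw [prefixProd, ← f1']
  have hpre_q' : prefixProd cs Q F q' = cs.wordProd (map Prod.snd A₃) := by
    rw [prefixProd, ← f3]
  -- the three reflections
  have h1' : (cs.wordProd (map Prod.snd A₁) * cs.simple (Q.getD q default)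
        * (cs.wordProd (map Prod.snd A₁))⁻¹) * cs.wordProd (complement Q (F.erase q)) = π := by
    have h := cs.getD_leftInvSeq_mul_wordProd
      (map Prod.snd A₁ ++ Q.getD q default :: map Prod.snd B₁) (map Prod.snd A₁).length
    rw [eraseIdx_split, lis_getD_split] at h
    rw [hL1, h, ← hcFeq, hcFprod]
  have h2' : (cs.wordProd (map Prod.snd A₂) * cs.simple (Q.getD q' default)
        * (cs.wordProd (map Prod.snd A₂))⁻¹) * cs.wordProd (complement Q (F.erase q)) = π := by
    have h := cs.getD_leftInvSeq_mul_wordProd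
      (map Prod.snd A₂ ++ Q.getD q' default :: map Prod.snd B₂) (map Prod.snd A₂).length
    rw [eraseIdx_split, lis_getD_split] at h
    rw [hL2, h, ← hcF'eq, hcF'prod]
  have htt2 : cs.wordProd (map Prod.snd A₂) * cs.simple (Q.getD q' default)
        * (cs.wordProd (map Prod.snd A₂))⁻¹
      = cs.wordProd (map Prod.snd A₁) * cs.simple (Q.getD q default)
        * (cs.wordProd (map Prod.snd A₁))⁻¹ :=
    mul_right_cancel (h2'.trans h1'.symm)

  -- t₃ as an entry of the left inversion sequence of cF
  have hlis3 : (cs.leftInvSeq (complement Q F)).getD (map Prod.snd A₃).length 1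
      = cs.wordProd (map Prod.snd A₃) * cs.simple (Q.getD q' default)
        * (cs.wordProd (map Prod.snd A₃))⁻¹ := by
    conv_lhs => rw [hcFeq3]
    exact lis_getD_split cs _ _ _
  -- t₃ = t
  have ht3 : cs.wordProd (map Prod.snd A₃) * cs.simple (Q.getD q' default)
        * (cs.wordProd (map Prod.snd A₃))⁻¹
      = cs.wordProd (map Prod.snd A₁) * cs.simple (Q.getD q default)
        * (cs.wordProd (map Prod.snd A₁))⁻¹ := by
    rcases lt_or_gt_of_ne hqq' with hlt | hgt
    · have hA2 : A₂ = A₁ ++ (q, Q.getD q default) :: B₁.filter (fun p => p.1 < q') := by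
        rw [f2, filter_and_lt, e1, filter_append,
          filter_cons_of_pos (by simpa using hlt),
          filter_eq_self.mpr (fun a ha => by simpa using (lt1 a ha).trans hlt)]
      have hA3 : A₃ = A₁ ++ B₁.filter (fun p => p.1 < q') := by
        rw [f3, filter_and_lt, i1, filter_append,
          filter_eq_self.mpr (fun a ha => by simpa using (lt1 a ha).trans hlt)]
      rw [hA2, map_append, map_cons, cs.wordProd_append, cs.wordProd_cons] at htt2
      rw [hA3, map_append, cs.wordProd_append]
      set u := cs.wordProd (map Prod.snd A₁) with hu
      set v := cs.wordProd (map Prod.snd (B₁.filter (fun p => p.1 < q'))) with hv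
      set a := cs.simple (Q.getD q default) with ha
      set b := cs.simple (Q.getD q' default) with hb
      have hvb : v * b * v⁻¹ = a := by
        calc v * b * v⁻¹
            = (u * a)⁻¹ * ((u * (a * v)) * b * (u * (a * v))⁻¹) * (u * a) := by group
          _ = (u * a)⁻¹ * (u * a * u⁻¹) * (u * a) := by rw [htt2]
          _ = a := by group
      calc (u * v) * b * (u * v)⁻¹ = u * (v * b * v⁻¹) * u⁻¹ := by group
        _ = u * a * u⁻¹ := by rw [hvb]
    · have hA23 : A₂ = A₃ := by
        rw [f2, f3]
        apply filter_congr
        intro x _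
        rw [decide_eq_decide]
        constructor
        · rintro ⟨h1, h2⟩
          exact ⟨fun hf => h1 (Finset.mem_erase.mpr ⟨Nat.ne_of_lt (h2.trans hgt), hf⟩), h2⟩
        · rintro ⟨h1, h2⟩
          exact ⟨fun hf => h1 (Finset.mem_of_mem_erase hf), h2⟩
      rw [hA23] at htt2
      exact htt2
  -- length facts giving the sign of r_F(q')
  have hred3 : cs.length (cs.wordProd (map Prod.snd A₃)) = (map Prod.snd A₃).length := by
    have r1 := CoxeterSystem.IsReduced.take hcFred (map Prod.snd A₃).length
    rw [hcFeq3, take_left] at r1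
    simpa [CoxeterSystem.IsReduced] using r1
  have hred3s : cs.length (cs.wordProd (map Prod.snd A₃) * cs.simple (Q.getD q' default))
      = (map Prod.snd A₃).length + 1 := by
    have r2 := CoxeterSystem.IsReduced.take hcFred ((map Prod.snd A₃).length + 1)
    rw [hcFeq3, take_split] at r2
    simpa [CoxeterSystem.IsReduced, cs.wordProd_append, cs.wordProd_cons, cs.wordProd_nil]
      using r2
  have hrootq' : rootF cs Q F q'
      = (cs.wordProd (map Prod.snd A₃) * cs.simple (Q.getD q' default)
          * (cs.wordProd (map Prod.snd A₃))⁻¹,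
        decide (cs.length (cs.wordProd (map Prod.snd A₃))
          < cs.length (cs.wordProd (map Prod.snd A₃) * cs.simple (Q.getD q' default)))) := by
    simp only [rootF, rootPair, hpre_q']
  have hsq' : decide (cs.length (cs.wordProd (map Prod.snd A₃))
      < cs.length (cs.wordProd (map Prod.snd A₃) * cs.simple (Q.getD q' default))) = true := by
    rw [hred3, hred3s]
    simp
  have hrootq : rootF cs Q F q
      = (cs.wordProd (map Prod.snd A₁) * cs.simple (Q.getD q default)
          * (cs.wordProd (map Prod.snd A₁))⁻¹,
        decide (cs.length (cs.wordProd (map Prod.snd A₁))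
          < cs.length (cs.wordProd (map Prod.snd A₁) * cs.simple (Q.getD q default)))) := by
    simp only [rootF, rootPair, hpre_q]
  -- signs of r_F(q) in the two cases
  have hpos : q < q' → rootF cs Q F q' = rootF cs Q F q := by
    intro hlt
    have hA2 : A₂ = A₁ ++ (q, Q.getD q default) :: B₁.filter (fun p => p.1 < q') := by
      rw [f2, filter_and_lt, e1, filter_append,
        filter_cons_of_pos (by simpa using hlt),
        filter_eq_self.mpr (fun a ha => by simpa using (lt1 a ha).trans hlt)]
    have hcF'eq2 : complement Q (insert q' (F.erase q))
        = map Prod.snd A₁ ++ Q.getD q default ::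
          (map Prod.snd (B₁.filter (fun p => p.1 < q')) ++ map Prod.snd B₂) := by
      rw [hcF'eq, hA2, map_append, map_cons, append_assoc, cons_append]
    have r1 := CoxeterSystem.IsReduced.take hcF'red (map Prod.snd A₁).length
    rw [hcF'eq2, take_left] at r1
    have r2 := CoxeterSystem.IsReduced.take hcF'red ((map Prod.snd A₁).length + 1)
    rw [hcF'eq2, take_split] at r2
    simp only [CoxeterSystem.IsReduced] at r1 r2
    rw [cs.wordProd_append, cs.wordProd_cons, cs.wordProd_nil, mul_one] at r2
    rw [length_append, length_cons, length_nil] at r2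
    rw [hrootq, hrootq', Prod.mk.injEq]
    refine ⟨ht3, ?_⟩
    rw [hsq', r1, r2]
    simp
  have hneg : q' < q → rootF cs Q F q' = negRoot (rootF cs Q F q) := by
    intro hgt
    have hk3 : A₃.length < A₁.length := by
      have h := relIdx_lt Q F hgt hq'F hq'len
      rw [← f3, ← f1'] at h
      exact h
    have hk3len : (map Prod.snd A₃).length < (cs.leftInvSeq (complement Q F)).length := by
      rw [cs.length_leftInvSeq, hcFeq3]
      simp
    have hmem : cs.wordProd (map Prod.snd A₃) * cs.simple (Q.getD q' default)
        * (cs.wordProd (map Prod.snd A₃))⁻¹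
        ∈ cs.leftInvSeq (take (map Prod.snd A₁).length (complement Q F)) := by
      rw [cs.leftInvSeq_take]
      have hgetd : (cs.leftInvSeq (complement Q F)).getD (map Prod.snd A₃).length 1
          = (cs.leftInvSeq (complement Q F))[(map Prod.snd A₃).length] :=
        getD_eq_getElem _ 1 hk3len
      have hkj : (map Prod.snd A₃).length < (map Prod.snd A₁).length := by
        simpa using hk3
      have htake : (take (map Prod.snd A₁).length
            (cs.leftInvSeq (complement Q F)))[(map Prod.snd A₃).length]'(by
              rw [length_take]; exact lt_min hkj hk3len)
          = (cs.leftInvSeq (complement Q F))[(map Prod.snd A₃).length] :=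
        getElem_take
      rw [← hlis3, hgetd, ← htake]
      exact getElem_mem _
    have hinv := cs.isLeftInversion_of_mem_leftInvSeq
      (CoxeterSystem.IsReduced.take hcFred (map Prod.snd A₁).length) hmem
    have hlen := hinv.2
    rw [hcFeq, take_left] at hlen
    rw [ht3, inv_mul_cancel_right] at hlen
    rw [hrootq, hrootq']
    simp only [negRoot, Prod.mk.injEq]
    refine ⟨ht3, ?_⟩
    have hnlt : ¬ cs.length (cs.wordProd (map Prod.snd A₁))
        < cs.length (cs.wordProd (map Prod.snd A₁) * cs.simple (Q.getD q default)) :=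
      Nat.not_lt.mpr (Nat.le_of_lt hlen)
    rw [hsq', decide_eq_false hnlt]
    rfl
  -- uniqueness
  have huniq : ∀ p ∈ Finset.range Q.length, p ∉ F →
      (rootF cs Q F p = rootF cs Q F q ∨ rootF cs Q F p = negRoot (rootF cs Q F q)) →
      p = q' := by
    intro p hpmem hpF hpdis
    have hplen : p < Q.length := Finset.mem_range.mp hpmem
    have hp1 : (rootF cs Q F p).1 = cs.wordProd (map Prod.snd A₁)
        * cs.simple (Q.getD q default) * (cs.wordProd (map Prod.snd A₁))⁻¹ := by
      rcases hpdis with h | h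
      · rw [h, hrootq]
      · rw [h, hrootq, negRoot]
    obtain ⟨A₄, B₄, e4, lt4, gt4, f4, i4⟩ := complement_split Q F hplen hpF
    have hcFeq4 : complement Q F
        = map Prod.snd A₄ ++ Q.getD p default :: map Prod.snd B₄ := by
      rw [complement, e4, map_append, map_cons]
    have hpre_p : prefixProd cs Q F p = cs.wordProd (map Prod.snd A₄) := by
      rw [prefixProd, ← f4]
    have hroot_p : (rootF cs Q F p).1 = cs.wordProd (map Prod.snd A₄)
        * cs.simple (Q.getD p default) * (cs.wordProd (map Prod.snd A₄))⁻¹ := by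
      simp only [rootF, rootPair, hpre_p]
    have hlis4 : (cs.leftInvSeq (complement Q F)).getD (map Prod.snd A₄).length 1
        = cs.wordProd (map Prod.snd A₄) * cs.simple (Q.getD p default)
          * (cs.wordProd (map Prod.snd A₄))⁻¹ := by
      conv_lhs => rw [hcFeq4]
      exact lis_getD_split cs _ _ _
    have hk4len : (map Prod.snd A₄).length < (cs.leftInvSeq (complement Q F)).length := by
      rw [cs.length_leftInvSeq, hcFeq4]
      simp
    have hk3len : (map Prod.snd A₃).length < (cs.leftInvSeq (complement Q F)).length := by
      rw [cs.length_leftInvSeq, hcFeq3]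
      simp
    have hgd : (cs.leftInvSeq (complement Q F)).getD (map Prod.snd A₄).length 1
        = (cs.leftInvSeq (complement Q F)).getD (map Prod.snd A₃).length 1 := by
      rw [hlis4, hlis3, ← hroot_p, hp1, ht3]
    rw [getD_eq_getElem _ 1 hk4len, getD_eq_getElem _ 1 hk3len] at hgd
    have hkk : (map Prod.snd A₄).length = (map Prod.snd A₃).length :=
      ((CoxeterSystem.IsReduced.nodup_leftInvSeq cs hcFred).getElem_inj_iff).mp hgd
    simp only [length_map] at hkk
    by_contra hne
    rcases lt_or_gt_of_ne hne with h | h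
    · have := relIdx_lt Q F h hpF hplen
      rw [← f4, ← f3] at this
      omega
    · have := relIdx_lt Q F h hq'F hq'len
      rw [← f4, ← f3] at this
      omega
  refine ⟨?_, huniq, hpos, hneg⟩
  rcases lt_or_gt_of_ne hqq' with h | h
  · exact Or.inl (hpos h)
  · exact Or.inr (hneg h)

end SubwordComplex
end
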